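/- If a ⪯ b in the key poset and rk(b) = rk(a) + 1, then b is obtained from a by incrementing a single part a_j by 1, where for every i < j we have a_i ≠ a_j + 1. -/
import Mathlib


/-- The key poset order on weak compositions of length `n` (functions `Fin n → ℕ`):
`a ⪯ b` iff `a i ≤ b i` for all `i`, and for all `i < j`, if `b j > a j` and
`a i > a j` then `b i > b j`. -/
def KeyLE {n : ℕ} (a b : Fin n → ℕ) : Prop :=
  (∀ i, a i ≤ b i) ∧ ∀ i j : Fin n, i < j → a j < b j → a j < a i → b j < b i

/-- Strict key order. -/
def KeyLT {n : ℕ} (a b : Fin n → ℕ) : Prop := KeyLE a b ∧ a ≠ b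

/-- Cover relation in the key poset. -/
def KeyCovers {n : ℕ} (a b : Fin n → ℕ) : Prop :=
  KeyLT a b ∧ ¬ ∃ c : Fin n → ℕ, KeyLT a c ∧ KeyLT c b

/-- The rank of a weak composition: the sum of its parts. -/
def rk {n : ℕ} (a : Fin n → ℕ) : ℕ := ∑ i, a i

/-- If a ⪯ b and rk b = rk a + 1, then b is obtained from a by incrementing a
single part a_j by 1, where a_i ≠ a_j + 1 for all i < j. -/
theorem keyLE_rank_succ {n : ℕ} (a b : Fin n → ℕ)
    (hab : KeyLE a b) (hrk : rk b = rk a + 1) :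
    ∃ j : Fin n, b j = a j + 1 ∧ (∀ i, i ≠ j → b i = a i) ∧
      ∀ i, i < j → a i ≠ a j + 1 := by
  obtain ⟨hle, hcond⟩ := hab
  have hsum : ∑ i, (b i - a i) = 1 := by
    have : ∑ i, (b i - a i) = ∑ i, b i - ∑ i, a i := by
      rw [Finset.sum_tsub_distrib]
      intro i _; exact hle i
    rw [this]
    simp [rk] at hrk
    omega
  -- find j with b j - a j ≠ 0
  have hex : ∃ j : Fin n, b j - a j ≠ 0 := by
    by_contra h
    push_neg at h
    have : ∑ i, (b i - a i) = 0 := Finset.sum_eq_zero fun i _ => h i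
    omega
  obtain ⟨j, hj⟩ := hex
  have hsplit : (b j - a j) + ∑ k ∈ Finset.univ.erase j, (b k - a k) = ∑ i, (b i - a i) :=
    Finset.add_sum_erase Finset.univ (fun i => b i - a i) (Finset.mem_univ j)
  have hrest : ∀ i, i ≠ j → b i - a i = 0 := by
    intro i hij
    have hmem : i ∈ Finset.univ.erase j := Finset.mem_erase.2 ⟨hij, Finset.mem_univ i⟩
    have hle0 : ∑ k ∈ Finset.univ.erase j, (b k - a k) = 0 := by omega
    have := Finset.sum_eq_zero_iff.1 hle0 i hmem
    exact this
  have hbj : b j = a j + 1 := by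
    have := hle j
    have : b j - a j = 1 := by
      have h2 : ∑ k ∈ Finset.univ.erase j, (b k - a k) = 0 := by omega
      omega
    omega
  have heq : ∀ i, i ≠ j → b i = a i := by
    intro i hij
    have := hle i
    have := hrest i hij
    omega
  refine ⟨j, hbj, heq, ?_⟩
  intro i hij hcontra
  have h1 : a j < b j := by omega
  have h2 : a j < a i := by omega
  have h3 := hcond i j hij h1 h2
  have h4 : b i = a i := heq i (ne_of_lt hij)
  omega
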